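/- arXiv:2109.08467 — 3 statements merged into one kernel-verified Lean document; each statement's English description precedes it below -/
import Mathlib

section
/- Let A be a finite index set with |A| = d ≥ 1, and let (Y_i)_{i∈A} be mutually independent real-valued random variables on a probability space, where Y_i is Gaussian with mean θ_i and variance σ_i² satisfying σ_i² ≤ 1 for every i ∈ A. Let I be a nonempty finite family of nonempty subsets of A. Define f(a) := E[max_{i∈a} Y_i] and g(a) := max_{i∈a} θ_i for a ∈ I. If a* ∈ I minimizes f over I and ã* ∈ I minimizes g over I, then f(ã*) − f(a*) ≤ √(2 log d). -/
open MeasureTheory ProbabilityTheory Real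

lemma gauss_pdf_mul_exp (m : ℝ) (v : NNReal) (hv : v ≠ 0) (t x : ℝ) :
    gaussianPDFReal m v x * Real.exp (t * x)
      = Real.exp (t * m + v * t ^ 2 / 2) * gaussianPDFReal (m + t * v) v x := by
  have hv0 : (v : ℝ) ≠ 0 := by exact_mod_cast hv
  unfold gaussianPDFReal
  rw [mul_assoc, ← Real.exp_add, mul_left_comm, ← Real.exp_add]
  congr 1
  field_simp
  ring

lemma integrable_dirac_of_measurable {f : ℝ → ℝ} (hf : Measurable f) (a : ℝ) :
    Integrable f (Measure.dirac a) := by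
  refine ⟨hf.aestronglyMeasurable, ?_⟩
  rw [HasFiniteIntegral, lintegral_dirac' a (by fun_prop)]
  exact ENNReal.coe_lt_top

lemma withDensity_gaussPDF (m : ℝ) (v : NNReal) :
    volume.withDensity (gaussianPDF m v)
      = volume.withDensity (fun x => ((gaussianPDFReal m v x).toNNReal : ENNReal)) := rfl

lemma smul_pdf_eq (m : ℝ) (v : NNReal) (hv : v ≠ 0) (t : ℝ) :
    (fun x => (gaussianPDFReal m v x).toNNReal • Real.exp (t * x))
      = fun x => Real.exp (t * m + v * t ^ 2 / 2) * gaussianPDFReal (m + t * v) v x := by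
  funext x
  rw [NNReal.smul_def, smul_eq_mul, Real.coe_toNNReal _ (gaussianPDFReal_nonneg _ _ _),
    gauss_pdf_mul_exp m v hv t x]

lemma integrable_exp_mul_gaussianReal (m : ℝ) (v : NNReal) (t : ℝ) :
    Integrable (fun x => Real.exp (t * x)) (gaussianReal m v) := by
  by_cases hv : v = 0
  · subst hv
    rw [gaussianReal_zero_var]
    exact integrable_dirac_of_measurable (by fun_prop) m
  · rw [gaussianReal_of_var_ne_zero _ hv, withDensity_gaussPDF,
      integrable_withDensity_iff_integrable_smul
        ((measurable_gaussianPDFReal m v).real_toNNReal), smul_pdf_eq m v hv t]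
    exact (integrable_gaussianPDFReal _ _).const_mul _

lemma integral_exp_mul_gaussianReal (m : ℝ) (v : NNReal) (t : ℝ) :
    ∫ x, Real.exp (t * x) ∂(gaussianReal m v) = Real.exp (t * m + v * t ^ 2 / 2) := by
  by_cases hv : v = 0
  · subst hv
    rw [gaussianReal_zero_var, integral_dirac]
    simp
  · rw [gaussianReal_of_var_ne_zero _ hv, withDensity_gaussPDF,
      integral_withDensity_eq_integral_smul
        ((measurable_gaussianPDFReal m v).real_toNNReal), smul_pdf_eq m v hv t,
      integral_const_mul, integral_gaussianPDFReal_eq_one _ hv, mul_one]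

lemma pdf0_mul_id_eq (v : NNReal) (x : ℝ) :
    gaussianPDFReal 0 v x * x = (√(2 * π * v))⁻¹ * (x * Real.exp (-(2 * (v:ℝ))⁻¹ * x ^ 2)) := by
  unfold gaussianPDFReal
  ring_nf

lemma integrable_pdf0_mul_id (v : NNReal) (hv : v ≠ 0) :
    Integrable (fun x => gaussianPDFReal 0 v x * x) := by
  have hv0 : (0:ℝ) < (v:ℝ) := lt_of_le_of_ne (v.coe_nonneg) (by exact_mod_cast hv.symm)
  have hb : (0:ℝ) < (2 * v)⁻¹ := by positivity
  have h := ((integrable_mul_exp_neg_mul_sq hb).const_mul (√(2 * π * v))⁻¹)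
  exact h.congr (Filter.Eventually.of_forall fun x => (pdf0_mul_id_eq v x).symm)

lemma integral_pdf0_mul_id (v : NNReal) :
    ∫ x, gaussianPDFReal 0 v x * x = 0 := by
  have hodd : ∀ x : ℝ, gaussianPDFReal 0 v (-x) * (-x) = -(gaussianPDFReal 0 v x * x) := by
    intro x
    unfold gaussianPDFReal
    ring_nf
  have h := integral_neg_eq_self (fun x => gaussianPDFReal 0 v x * x) volume
  have h2 : ∫ x, gaussianPDFReal 0 v (-x) * (-x) = -∫ x, gaussianPDFReal 0 v x * x := by
    simp_rw [hodd]
    exact integral_neg _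
  rw [h] at h2
  linarith

lemma pdf_mul_id_shift (m : ℝ) (v : NNReal) (x : ℝ) :
    gaussianPDFReal m v x * x
      = gaussianPDFReal 0 v (x - m) * (x - m) + m * gaussianPDFReal 0 v (x - m) := by
  rw [gaussianPDFReal_sub, zero_add]
  ring

lemma integrable_pdf_mul_id (m : ℝ) (v : NNReal) (hv : v ≠ 0) :
    Integrable (fun x => gaussianPDFReal m v x * x) := by
  have h1 : Integrable (fun x => gaussianPDFReal 0 v (x - m) * (x - m)) :=
    (integrable_pdf0_mul_id v hv).comp_sub_right m
  have h2 : Integrable (fun x => m * gaussianPDFReal 0 v (x - m)) :=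
    (((integrable_gaussianPDFReal 0 v).comp_sub_right m).const_mul m)
  exact (h1.add h2).congr (Filter.Eventually.of_forall fun x => (pdf_mul_id_shift m v x).symm)

lemma integral_pdf_mul_id (m : ℝ) (v : NNReal) (hv : v ≠ 0) :
    ∫ x, gaussianPDFReal m v x * x = m := by
  simp_rw [pdf_mul_id_shift m v]
  rw [integral_add ((integrable_pdf0_mul_id v hv).comp_sub_right m)
    (((integrable_gaussianPDFReal 0 v).comp_sub_right m).const_mul m)]
  have e1 : ∫ x : ℝ, gaussianPDFReal 0 v (x - m) * (x - m)
      = ∫ x, gaussianPDFReal 0 v x * x :=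
    integral_sub_right_eq_self (fun x => gaussianPDFReal 0 v x * x) m
  have e2 : ∫ x : ℝ, m * gaussianPDFReal 0 v (x - m) = m := by
    rw [integral_const_mul]
    rw [integral_sub_right_eq_self (gaussianPDFReal 0 v) m,
      integral_gaussianPDFReal_eq_one 0 hv, mul_one]
  rw [e1, e2, integral_pdf0_mul_id, zero_add]

lemma integrable_id_gaussianReal (m : ℝ) (v : NNReal) :
    Integrable (fun x => x) (gaussianReal m v) := by
  by_cases hv : v = 0
  · subst hv
    rw [gaussianReal_zero_var]
    refine ⟨measurable_id.aestronglyMeasurable, ?_⟩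
    rw [HasFiniteIntegral, lintegral_dirac' m (by fun_prop)]
    exact ENNReal.coe_lt_top
  · rw [gaussianReal_of_var_ne_zero _ hv, withDensity_gaussPDF,
      integrable_withDensity_iff_integrable_smul
        ((measurable_gaussianPDFReal m v).real_toNNReal)]
    refine (integrable_pdf_mul_id m v hv).congr
      (Filter.Eventually.of_forall fun x => ?_)
    simp only
    rw [NNReal.smul_def, smul_eq_mul, Real.coe_toNNReal _ (gaussianPDFReal_nonneg _ _ _)]

lemma integral_id_gaussianReal (m : ℝ) (v : NNReal) :
    ∫ x, x ∂(gaussianReal m v) = m := by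
  by_cases hv : v = 0
  · subst hv
    rw [gaussianReal_zero_var, integral_dirac]
  · rw [gaussianReal_of_var_ne_zero _ hv, withDensity_gaussPDF,
      integral_withDensity_eq_integral_smul
        ((measurable_gaussianPDFReal m v).real_toNNReal)]
    have e : (fun x => (gaussianPDFReal m v x).toNNReal • x)
        = fun x => gaussianPDFReal m v x * x := by
      funext x
      rw [NNReal.smul_def, smul_eq_mul, Real.coe_toNNReal _ (gaussianPDFReal_nonneg _ _ _)]
    rw [e, integral_pdf_mul_id m v hv]

lemma integrable_finset_sup' {Ω : Type*} [MeasurableSpace Ω] {P : Measure Ω}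
    {A : Type*} {a : Finset A} (h : a.Nonempty) {Y : A → Ω → ℝ}
    (hY : ∀ i ∈ a, Integrable (Y i) P) :
    Integrable (fun ω => a.sup' h fun i => Y i ω) P := by
  induction h using Finset.Nonempty.cons_induction with
  | singleton i => simpa using hY i (by simp)
  | cons i s his hs ih =>
    have : (fun ω => (Finset.cons i s his).sup' (by simp) fun j => Y j ω)
        = fun ω => Y i ω ⊔ s.sup' hs fun j => Y j ω := by
      funext ω; rw [Finset.sup'_cons]
    rw [this]
    exact (hY i (by simp)).sup (ih fun j hj => hY j (by simp [hj]))


/-- **Theorem 2 of the paper.** The exact objective `f` (expected maximum of Gaussian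
feedbacks), evaluated at the minimizer of the approximate objective `g` (maximum of
the means), exceeds the exact optimum by at most `√(2 log d)`. -/
theorem approx_optimal_arm_difference
    {Ω : Type*} [MeasurableSpace Ω] (P : Measure Ω) [IsProbabilityMeasure P]
    {A : Type*} [Fintype A] (d : ℕ) (hd : 1 ≤ d) (hcard : Fintype.card A = d)
    (Y : A → Ω → ℝ) (θ : A → ℝ) (σ2 : A → NNReal)
    (hσ : ∀ i, (σ2 i : ℝ) ≤ 1)
    (hindep : iIndepFun Y P)
    (hY : ∀ i, Measure.map (Y i) P = gaussianReal (θ i) (σ2 i))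
    (I : Finset (Finset A)) (hInonempty : I.Nonempty)
    (hne : ∀ a ∈ I, a.Nonempty)
    (f g : Finset A → ℝ)
    (hf : ∀ a (ha : a ∈ I), f a = ∫ ω, a.sup' (hne a ha) (fun i => Y i ω) ∂P)
    (hg : ∀ a (ha : a ∈ I), g a = a.sup' (hne a ha) θ)
    (astar : Finset A) (hastar : astar ∈ I) (hastar_min : ∀ b ∈ I, f astar ≤ f b)
    (atil : Finset A) (hatil : atil ∈ I) (hatil_min : ∀ b ∈ I, g atil ≤ g b) :
    f atil - f astar ≤ Real.sqrt (2 * Real.log d) := by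
  by_cases hd1 : d = 1
  · have huniv : ∀ a ∈ I, a = Finset.univ := by
      intro a ha
      refine Finset.eq_univ_of_card a (le_antisymm (Finset.card_le_univ a) ?_)
      rw [hcard, hd1]
      exact (hne a ha).card_pos
    rw [huniv atil hatil, ← huniv astar hastar]
    simpa using Real.sqrt_nonneg _
  -- d ≥ 2
  have hd2 : 2 ≤ d := by omega
  have hd1R : (1:ℝ) < (d:ℝ) := by exact_mod_cast hd2.trans_lt' one_lt_two
  have hlog : 0 < Real.log d := Real.log_pos hd1R
  set t : ℝ := Real.sqrt (2 * Real.log d) with htdef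
  have ht : 0 < t := Real.sqrt_pos.mpr (by linarith)
  have ht2 : t ^ 2 = 2 * Real.log d := Real.sq_sqrt (by linarith)
  -- basic facts about the Y i
  have hmeas : ∀ i, AEMeasurable (Y i) P := by
    intro i
    by_contra h
    have h0 := Measure.map_of_not_aemeasurable h
    rw [hY i] at h0
    exact IsProbabilityMeasure.ne_zero (gaussianReal (θ i) (σ2 i)) h0
  have hint : ∀ i, Integrable (Y i) P := by
    intro i
    have h0 := integrable_id_gaussianReal (θ i) (σ2 i)
    rw [← hY i] at h0
    exact (integrable_map_measure aestronglyMeasurable_id (hmeas i)).mp h0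
  have hmean : ∀ i, ∫ ω, Y i ω ∂P = θ i := by
    intro i
    have h0 := integral_id_gaussianReal (θ i) (σ2 i)
    rwa [← hY i, integral_map (f := fun x => x) (hmeas i) aestronglyMeasurable_id] at h0
  have hexpi : ∀ i, Integrable (fun ω => Real.exp (t * Y i ω)) P := by
    intro i
    have h0 := integrable_exp_mul_gaussianReal (θ i) (σ2 i) t
    rw [← hY i] at h0
    exact (integrable_map_measure
      ((measurable_const_mul t).exp.aestronglyMeasurable)
      (hmeas i)).mp h0
  have hexpmean : ∀ i, ∫ ω, Real.exp (t * Y i ω) ∂P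
      = Real.exp (t * θ i + σ2 i * t ^ 2 / 2) := by
    intro i
    have h0 := integral_exp_mul_gaussianReal (θ i) (σ2 i) t
    rwa [← hY i, integral_map (hmeas i)
      ((measurable_const_mul t).exp.aestronglyMeasurable)] at h0
  -- g ≤ f
  have hgf : ∀ a (ha : a ∈ I), g a ≤ f a := by
    intro a ha
    obtain ⟨i, hi, hsup⟩ := Finset.exists_mem_eq_sup' (hne a ha) θ
    rw [hg a ha, hf a ha, hsup, ← hmean i]
    exact integral_mono (hint i) (integrable_finset_sup' _ fun j _ => hint j)
      fun ω => Finset.le_sup' (fun j => Y j ω) hi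
  -- f ≤ g + t
  have hfg : ∀ a (ha : a ∈ I), f a ≤ g a + t := by
    intro a ha
    set F := fun ω => a.sup' (hne a ha) fun i => Y i ω with hF
    have hFint : Integrable F P := integrable_finset_sup' _ fun j _ => hint j
    have hmono : Monotone fun x : ℝ => Real.exp (t * x) :=
      fun x y hxy => Real.exp_le_exp.mpr (by nlinarith)
    have hexp_eq : ∀ ω, Real.exp (t * F ω)
        = a.sup' (hne a ha) fun i => Real.exp (t * Y i ω) := by
      intro ω
      exact Finset.comp_sup'_eq_sup'_comp (hne a ha) (fun x => Real.exp (t * x))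
        fun x y => hmono.map_sup x y
    have hexpF : Integrable (fun ω => Real.exp (t * F ω)) P := by
      simp_rw [hexp_eq]
      exact integrable_finset_sup' _ fun j _ => hexpi j
    have hjen : Real.exp (t * f a) ≤ ∫ ω, Real.exp (t * F ω) ∂P := by
      have h0 := ConvexOn.map_integral_le (μ := P) convexOn_exp
        continuous_exp.continuousOn isClosed_univ
        (Filter.Eventually.of_forall fun ω => Set.mem_univ (t * F ω))
        (hFint.const_mul t) (by exact hexpF)
      have hfa' : f a = ∫ ω, F ω ∂P := hf a ha
      rw [integral_const_mul] at h0
      rw [hfa']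
      exact h0
    have hsum : ∫ ω, Real.exp (t * F ω) ∂P
        ≤ ∑ i ∈ a, Real.exp (t * θ i + σ2 i * t ^ 2 / 2) := by
      have hle : ∀ ω, Real.exp (t * F ω) ≤ ∑ i ∈ a, Real.exp (t * Y i ω) := by
        intro ω
        rw [hexp_eq ω]
        obtain ⟨j, hj, hsup⟩ := Finset.exists_mem_eq_sup' (hne a ha)
          fun i => Real.exp (t * Y i ω)
        rw [hsup]
        exact Finset.single_le_sum (f := fun i => Real.exp (t * Y i ω)) (fun i _ => (Real.exp_pos _).le) hj
      calc ∫ ω, Real.exp (t * F ω) ∂P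
          ≤ ∫ ω, ∑ i ∈ a, Real.exp (t * Y i ω) ∂P :=
            integral_mono hexpF (integrable_finset_sum _ fun i _ => hexpi i) hle
        _ = ∑ i ∈ a, ∫ ω, Real.exp (t * Y i ω) ∂P :=
            integral_finset_sum _ fun i _ => hexpi i
        _ = ∑ i ∈ a, Real.exp (t * θ i + σ2 i * t ^ 2 / 2) := by
            exact Finset.sum_congr rfl fun i _ => hexpmean i
    have hsum2 : ∑ i ∈ a, Real.exp (t * θ i + σ2 i * t ^ 2 / 2)
        ≤ (d : ℝ) * Real.exp (t * g a + t ^ 2 / 2) := by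
      have hterm : ∀ i ∈ a, Real.exp (t * θ i + σ2 i * t ^ 2 / 2)
          ≤ Real.exp (t * g a + t ^ 2 / 2) := by
        intro i hi
        apply Real.exp_le_exp.mpr
        have h1 : θ i ≤ g a := by
          rw [hg a ha]; exact Finset.le_sup' θ hi
        have h2 : (σ2 i : ℝ) * t ^ 2 ≤ t ^ 2 := by
          nlinarith [sq_nonneg t, hσ i, (σ2 i).coe_nonneg]
        nlinarith
      calc ∑ i ∈ a, Real.exp (t * θ i + σ2 i * t ^ 2 / 2)
          ≤ ∑ _i ∈ a, Real.exp (t * g a + t ^ 2 / 2) := Finset.sum_le_sum hterm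
        _ = (a.card : ℝ) * Real.exp (t * g a + t ^ 2 / 2) := by
            rw [Finset.sum_const, nsmul_eq_mul]
        _ ≤ (d : ℝ) * Real.exp (t * g a + t ^ 2 / 2) := by
            have : (a.card : ℝ) ≤ (d : ℝ) := by
              exact_mod_cast hcard ▸ Finset.card_le_univ a
            nlinarith [Real.exp_pos (t * g a + t ^ 2 / 2)]
    have hkey : Real.exp (t * f a) ≤ Real.exp (Real.log d + t * g a + t ^ 2 / 2) := by
      have : Real.exp (Real.log d + t * g a + t ^ 2 / 2)
          = (d : ℝ) * Real.exp (t * g a + t ^ 2 / 2) := by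
        rw [Real.exp_add, Real.exp_add, Real.exp_log (by linarith), mul_assoc,
          ← Real.exp_add]
      rw [this]
      exact hjen.trans (hsum.trans hsum2)
    have hlin : t * f a ≤ Real.log d + t * g a + t ^ 2 / 2 := Real.exp_le_exp.mp hkey
    have : t * f a ≤ t * g a + t * t := by nlinarith [ht2]
    nlinarith
  have h1 := hfg atil hatil
  have h2 := hatil_min astar hastar
  have h3 := hgf astar hastar
  linarith
end

section
/- Let Z be a real-valued random variable whose law is the Gaussian measure N(0, v) with 0 < v ≤ 1, and let c ≥ 0. Then the conditional expectation E[|Z| − c | |Z| > c] is at most 1, where the conditional expectation given the event {|Z| > c} (which has positive probability) is defined as E[(|Z| − c)·1_{|Z|>c}] / P(|Z| > c). -/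
open MeasureTheory ProbabilityTheory

namespace GaussOvershootAux

open Real Set Filter

lemma pdf_even (v : NNReal) (x : ℝ) : gaussianPDFReal 0 v |x| = gaussianPDFReal 0 v x := by
  simp [gaussianPDFReal, sq_abs]

lemma pdf_tendsto (v : NNReal) (hv : 0 < (v : ℝ)) :
    Tendsto (gaussianPDFReal 0 v) atTop (nhds 0) := by
  have h1 : Tendsto (fun x : ℝ => -(x - 0) ^ 2 / (2 * (v : ℝ))) atTop atBot := by
    apply Filter.Tendsto.atBot_div_const (by positivity)
    simpa using (tendsto_pow_atTop (n := 2) (by norm_num)).neg.comp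
      (tendsto_atTop_add_const_right atTop (0:ℝ) tendsto_id)
  have := (Real.tendsto_exp_atBot.comp h1).const_mul ((Real.sqrt (2 * π * v))⁻¹)
  simpa [gaussianPDFReal_def, mul_zero] using this

lemma pdf_hasDerivAt (v : NNReal) (hv : 0 < (v : ℝ)) (x : ℝ) :
    HasDerivAt (gaussianPDFReal 0 v) (-(x / v) * gaussianPDFReal 0 v x) x := by
  have h1 : HasDerivAt (fun x : ℝ => -(x - 0) ^ 2 / (2 * (v : ℝ))) (-(x / v)) x := by
    have h := (((hasDerivAt_id x).sub_const 0).pow 2).neg.div_const (2 * (v : ℝ))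
    refine h.congr_deriv ?_
    simp only [id, sub_zero, pow_one, mul_one]
    field_simp
    ring
  have h2 := (h1.exp).const_mul ((Real.sqrt (2 * π * (v : ℝ)))⁻¹)
  rw [gaussianPDFReal_def]
  refine h2.congr_deriv ?_
  simp [gaussianPDFReal]
  ring

section FTC

variable (v : NNReal) (hv : 0 < (v : ℝ)) (c : ℝ) (hc : 0 ≤ c)

local notation "f" => gaussianPDFReal 0 v

lemma deriv1 (x : ℝ) (hv : 0 < (v : ℝ)) :
    HasDerivAt (fun x => -(v : ℝ) * f x) (x * f x) x := by
  have := (pdf_hasDerivAt v hv x).const_mul (-(v : ℝ))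
  refine this.congr_deriv ?_
  field_simp

lemma tendsto1 (hv : 0 < (v : ℝ)) :
    Tendsto (fun x => -(v : ℝ) * f x) atTop (nhds 0) := by
  simpa using (pdf_tendsto v hv).const_mul (-(v : ℝ))

include hv hc

lemma E1 : ∫ x in Ioi c, x * f x = (v : ℝ) * f c := by
  have := integral_Ioi_of_hasDerivAt_of_nonneg' (a := c)
    (fun x _ => deriv1 v x hv)
    (fun x hx => mul_nonneg (hc.trans hx.le) (gaussianPDFReal_nonneg 0 v x))
    (tendsto1 v hv)
  simpa using this

lemma I1 : IntegrableOn (fun x => x * f x) (Ioi c) := by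
  exact integrableOn_Ioi_deriv_of_nonneg' (fun x _ => deriv1 v x hv)
    (fun x hx => mul_nonneg (hc.trans hx.le) (gaussianPDFReal_nonneg 0 v x))
    (tendsto1 v hv)

lemma deriv2 (x : ℝ) (hx : x ∈ Ici c) :
    HasDerivAt (fun x => -(v : ℝ) * f x / (1 + x))
      (f x * (x ^ 2 + x + v) / (1 + x) ^ 2) x := by
  have hx1 : (1 : ℝ) + x ≠ 0 := by
    have : (0:ℝ) ≤ x := hc.trans hx
    positivity
  have h := (deriv1 v x hv).div ((hasDerivAt_id x).const_add 1) hx1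
  refine h.congr_deriv ?_
  simp only [id]
  field_simp
  ring

lemma tendsto2 : Tendsto (fun x => -(v : ℝ) * f x / (1 + x)) atTop (nhds 0) := by
  have h1 := tendsto1 v hv
  have h2 : Tendsto (fun x : ℝ => (1 + x)⁻¹) atTop (nhds 0) :=
    tendsto_inv_atTop_zero.comp (tendsto_atTop_add_const_left atTop 1 tendsto_id)
  simpa [div_eq_mul_inv] using h1.mul h2

lemma E2 : ∫ x in Ioi c, f x * (x ^ 2 + x + (v : ℝ)) / (1 + x) ^ 2
    = (v : ℝ) * f c / (1 + c) := by
  have := integral_Ioi_of_hasDerivAt_of_nonneg' (a := c)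
    (deriv2 v hv c hc)
    (fun x hx => by
      have hx0 : (0:ℝ) ≤ x := hc.trans hx.le
      have := gaussianPDFReal_nonneg 0 v x
      positivity)
    (tendsto2 v hv c hc)
  rw [this]
  ring

lemma I2 : IntegrableOn (fun x => f x * (x ^ 2 + x + (v : ℝ)) / (1 + x) ^ 2) (Ioi c) := by
  exact integrableOn_Ioi_deriv_of_nonneg' (deriv2 v hv c hc)
    (fun x hx => by
      have hx0 : (0:ℝ) ≤ x := hc.trans hx.le
      have := gaussianPDFReal_nonneg 0 v x
      positivity)
    (tendsto2 v hv c hc)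

lemma key (hv1 : (v : ℝ) ≤ 1) :
    ∫ x in Ioi c, f x * (x - c) ≤ ∫ x in Ioi c, f x := by
  have If : IntegrableOn (fun x => f x) (Ioi c) := (integrable_gaussianPDFReal 0 v).integrableOn
  set T : ℝ := ∫ x in Ioi c, f x with hTdef
  have hT : (v : ℝ) * f c / (1 + c) ≤ T := by
    rw [← E2 v hv c hc]
    apply setIntegral_mono_on (I2 v hv c hc) If measurableSet_Ioi
    intro x hx
    have hx0 : (0:ℝ) ≤ x := hc.trans hx.le
    have hf0 : 0 ≤ f x := gaussianPDFReal_nonneg 0 v x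
    rw [div_le_iff₀ (by positivity)]
    nlinarith [hf0, hx0, hv1]
  have hM : ∫ x in Ioi c, f x * (x - c) = (v : ℝ) * f c - c * T := by
    have : ∀ x : ℝ, f x * (x - c) = x * f x - c * f x := fun x => by ring
    simp_rw [this]
    rw [integral_sub (I1 v hv c hc) (If.const_mul c), E1 v hv c hc, integral_const_mul]
  rw [hM]
  have hfc : 0 ≤ f c := gaussianPDFReal_nonneg 0 v c
  have h1c : (0:ℝ) < 1 + c := by linarith
  have := (div_le_iff₀ h1c).mp hT
  nlinarith

end FTC

end GaussOvershootAux

open GaussOvershootAux Set Filter in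
/-- **Lemma 5 of the paper.** The expected overshoot of a zero-mean Gaussian with
variance at most 1 beyond a nonnegative threshold, conditional on exceeding the
threshold in absolute value, is at most 1. -/
theorem gaussian_conditional_overshoot_le_one
    {Ω : Type*} [MeasurableSpace Ω] (P : Measure Ω) [IsProbabilityMeasure P]
    (Z : Ω → ℝ) (v : NNReal) (hv0 : 0 < v) (hv1 : (v : ℝ) ≤ 1)
    (hZ : Measure.map Z P = gaussianReal 0 v) (c : ℝ) (hc : 0 ≤ c) :
    (∫ ω, (|Z ω| - c) * Set.indicator {ω | |Z ω| > c} (fun _ => (1 : ℝ)) ω ∂P) /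
      (P {ω | |Z ω| > c}).toReal ≤ 1 := by
  have hv : v ≠ 0 := hv0.ne'
  have hvR : 0 < (v : ℝ) := hv0
  set f : ℝ → ℝ := gaussianPDFReal 0 v with hf
  have hZm : AEMeasurable Z P := aemeasurable_of_map_neZero (by rw [hZ]; infer_instance)
  have hs : MeasurableSet {x : ℝ | |x| > c} := measurableSet_lt measurable_const measurable_id.abs
  set g : ℝ → ℝ := fun x => (|x| - c) * Set.indicator {x : ℝ | |x| > c} (fun _ => (1:ℝ)) x
    with hgdef
  have hgm : Measurable g :=
    (measurable_id.abs.sub measurable_const).mul (measurable_const.indicator hs)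
  set T : ℝ := ∫ x in Ioi c, f x with hT
  set M : ℝ := ∫ x in Ioi c, f x * (x - c) with hMdef
  have hT0 : 0 ≤ T := setIntegral_nonneg measurableSet_Ioi fun x _ => gaussianPDFReal_nonneg 0 v x
  -- numerator
  have hnum : (∫ ω, (|Z ω| - c) * Set.indicator {ω | |Z ω| > c} (fun _ => (1 : ℝ)) ω ∂P)
      = 2 * M := by
    have step1 : (∫ ω, (|Z ω| - c) * Set.indicator {ω | |Z ω| > c} (fun _ => (1 : ℝ)) ω ∂P)
        = ∫ x, g x ∂(gaussianReal 0 v) := by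
      rw [← hZ, integral_map hZm hgm.aestronglyMeasurable]
      refine integral_congr_ae (Filter.Eventually.of_forall fun ω => ?_)
      by_cases h : |Z ω| > c <;>
        simp [hgdef, Set.indicator_apply, Set.mem_setOf_eq, h]
    have step2 : ∫ x, g x ∂(gaussianReal 0 v) = ∫ x, (f x).toNNReal • g x := by
      rw [ProbabilityTheory.gaussianReal_of_var_ne_zero 0 hv]
      exact integral_withDensity_eq_integral_smul
        ((measurable_gaussianPDFReal 0 v).real_toNNReal) g
    have step3 : ∫ x, (f x).toNNReal • g x
        = ∫ x, (fun t => Set.indicator (Ioi c) (fun t => f t * (t - c)) t) |x| := by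
      refine integral_congr_ae (Filter.Eventually.of_forall fun x => ?_)
      have hfx : ((f x).toNNReal : ℝ) = f x := Real.coe_toNNReal _ (gaussianPDFReal_nonneg 0 v x)
      by_cases h : |x| > c
      · simp only [NNReal.smul_def, hfx, hgdef, Set.indicator_apply, Set.mem_setOf_eq,
          Set.mem_Ioi, h, if_true]
        rw [smul_eq_mul, hf, pdf_even v x]
        ring
      · simp [NNReal.smul_def, hgdef, Set.indicator_apply, Set.mem_setOf_eq, Set.mem_Ioi, h]
    rw [step1, step2, step3, integral_comp_abs, setIntegral_indicator measurableSet_Ioi,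
      Set.Ioi_inter_Ioi, max_eq_right hc]
  -- denominator
  have hden : (P {ω | |Z ω| > c}).toReal = 2 * T := by
    have hset : {ω | |Z ω| > c} = Z ⁻¹' {x : ℝ | |x| > c} := rfl
    rw [hset, ← Measure.map_apply_of_aemeasurable hZm hs, hZ,
      ProbabilityTheory.gaussianReal_apply_eq_integral 0 hv,
      ENNReal.toReal_ofReal (setIntegral_nonneg hs fun x _ => gaussianPDFReal_nonneg 0 v x)]
    rw [← integral_indicator hs]
    have : ∀ x : ℝ, Set.indicator {x : ℝ | |x| > c} f x
        = (fun t => Set.indicator (Ioi c) f t) |x| := by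
      intro x
      by_cases h : |x| > c
      · simp only [Set.indicator_apply, Set.mem_setOf_eq, Set.mem_Ioi, h, if_true]
        exact (pdf_even v x).symm
      · simp [Set.indicator_apply, Set.mem_setOf_eq, Set.mem_Ioi, h]
    rw [integral_congr_ae (Filter.Eventually.of_forall this), integral_comp_abs,
      setIntegral_indicator measurableSet_Ioi, Set.Ioi_inter_Ioi, max_eq_right hc]
  rw [hnum, hden]
  apply div_le_one_of_le₀
  · have := key v hvR c hc hv1
    linarith
  · linarith
end

section
/- Let Z be a real-valued random variable whose law is the Gaussian measure N(0, v) with 0 < v ≤ 1, and let c ≥ 0.exThen E[max(|Z| − c, 0)] ≤ P(|Z| > c). -/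
open MeasureTheory ProbabilityTheory Real Set Filter
open scoped ENNReal NNReal

private lemma gauss_exp_hasDeriv {v : ℝ} (hv : 0 < v) (t : ℝ) :
    HasDerivAt (fun x : ℝ => rexp (-x ^ 2 / (2 * v))) (rexp (-t ^ 2 / (2 * v)) * (-t / v)) t := by
  have h1 : HasDerivAt (fun x : ℝ => -x ^ 2 / (2 * v)) (-t / v) t := by
    have := ((hasDerivAt_pow 2 t).neg).div_const (2 * v)
    refine this.congr_deriv ?_
    field_simp
    ring
  exact h1.exp

private lemma gauss_exp_tendsto {v : ℝ} (hv : 0 < v) :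
    Tendsto (fun x : ℝ => rexp (-x ^ 2 / (2 * v))) atTop (nhds 0) := by
  apply Real.tendsto_exp_atBot.comp
  have h1 : Tendsto (fun x : ℝ => x ^ 2 / (2 * v)) atTop atTop :=
    (tendsto_pow_atTop two_ne_zero).atTop_div_const (by positivity)
  have h2 := tendsto_neg_atBot_iff.mpr h1
  refine h2.congr fun x => by ring

private lemma gauss_integrableOn_exp {v : ℝ} (hv : 0 < v) (c : ℝ) :
    IntegrableOn (fun t : ℝ => rexp (-t ^ 2 / (2 * v))) (Ioi c) := by
  have h := (integrable_exp_neg_mul_sq (b := (2 * v)⁻¹) (by positivity)).integrableOn (s := Ioi c)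
  convert h using 2 with t
  ring_nf

private lemma gauss_integrableOn_id_mul_exp {v : ℝ} (hv : 0 < v) (c : ℝ) :
    IntegrableOn (fun t : ℝ => t * rexp (-t ^ 2 / (2 * v))) (Ioi c) := by
  have h := (integrable_mul_exp_neg_mul_sq (b := (2 * v)⁻¹) (by positivity)).integrableOn (s := Ioi c)
  convert h using 2 with t
  ring_nf

private lemma gauss_integral_id_mul_exp {v : ℝ} (hv : 0 < v) (c : ℝ) :
    ∫ t in Ioi c, t * rexp (-t ^ 2 / (2 * v)) = v * rexp (-c ^ 2 / (2 * v)) := by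
  have hF : ∀ t ∈ Ici c, HasDerivAt (fun x : ℝ => -v * rexp (-x ^ 2 / (2 * v)))
      (t * rexp (-t ^ 2 / (2 * v))) t := by
    intro t _
    have := (gauss_exp_hasDeriv hv t).const_mul (-v)
    refine this.congr_deriv ?_
    field_simp
  have htend : Tendsto (fun x : ℝ => -v * rexp (-x ^ 2 / (2 * v))) atTop (nhds 0) := by
    have := (gauss_exp_tendsto hv).const_mul (-v)
    simpa using this
  have := integral_Ioi_of_hasDerivAt_of_tendsto' hF (gauss_integrableOn_id_mul_exp hv c) htend
  rw [this]
  ring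

private lemma gauss_tail_lb {v : ℝ} (hv0 : 0 < v) (hv1 : v ≤ 1) {c : ℝ} (hc : 0 ≤ c) :
    v * rexp (-c ^ 2 / (2 * v)) / (c + 1) ≤ ∫ t in Ioi c, rexp (-t ^ 2 / (2 * v)) := by
  set g : ℝ → ℝ := fun t => rexp (-t ^ 2 / (2 * v)) * (t / (t + 1) + v / (t + 1) ^ 2) with hg
  have hderiv : ∀ t ∈ Ici c, HasDerivAt
      (fun x : ℝ => -v * rexp (-x ^ 2 / (2 * v)) * (x + 1)⁻¹) (g t) t := by
    intro t ht
    have ht1 : t + 1 ≠ 0 := by have : (0:ℝ) ≤ t := hc.trans ht; positivity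
    have h1 : HasDerivAt (fun x : ℝ => -v * rexp (-x ^ 2 / (2 * v)))
        (-v * (rexp (-t ^ 2 / (2 * v)) * (-t / v))) t := (gauss_exp_hasDeriv hv0 t).const_mul (-v)
    have h2 : HasDerivAt (fun x : ℝ => (x + 1)⁻¹) (-(1 / (t + 1) ^ 2)) t := by
      have := ((hasDerivAt_id t).add_const 1).inv ht1
      exact this.congr_deriv (by simp [neg_div])
    have h3 := h1.mul h2
    have e1 : -v * (rexp (-t ^ 2 / (2 * v)) * (-t / v)) = t * rexp (-t ^ 2 / (2 * v)) := by
      field_simp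
    rw [e1] at h3
    refine h3.congr_deriv ?_
    rw [hg]
    field_simp
  have hbound : ∀ t ∈ Ioi c, g t ≤ rexp (-t ^ 2 / (2 * v)) := by
    intro t ht
    have ht0 : (0:ℝ) ≤ t := hc.trans (le_of_lt ht)
    have hp : (0:ℝ) < t + 1 := by positivity
    have h1 : v / (t + 1) ^ 2 ≤ 1 / (t + 1) := by
      rw [div_le_div_iff₀ (by positivity) hp]
      nlinarith
    have h2 : t / (t + 1) + v / (t + 1) ^ 2 ≤ 1 := by
      have : t / (t + 1) + 1 / (t + 1) = 1 := by field_simp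
      linarith
    calc g t ≤ rexp (-t ^ 2 / (2 * v)) * 1 :=
          mul_le_mul_of_nonneg_left h2 (exp_nonneg _)
      _ = _ := mul_one _
  have hgnn : ∀ t ∈ Ioi c, 0 ≤ g t := by
    intro t ht
    have ht0 : (0:ℝ) ≤ t := hc.trans (le_of_lt ht)
    have hp : (0:ℝ) < t + 1 := by positivity
    apply mul_nonneg (exp_nonneg _)
    positivity
  have hgm : AEStronglyMeasurable g (volume.restrict (Ioi c)) := by
    apply ContinuousOn.aestronglyMeasurable _ measurableSet_Ioi
    have hne : ∀ t ∈ Ioi c, t + 1 ≠ 0 := fun t ht => by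
      have : (0:ℝ) ≤ t := hc.trans (le_of_lt ht); positivity
    have h1 : ContinuousOn (fun t : ℝ => t + 1) (Ioi c) := by fun_prop
    exact (Continuous.continuousOn (by continuity)).mul
      ((continuousOn_id.div h1 hne).add
        (continuousOn_const.div (h1.pow 2) (fun t ht => pow_ne_zero 2 (hne t ht))))
  have hgint : IntegrableOn g (Ioi c) := by
    refine (gauss_integrableOn_exp hv0 c).mono' hgm ?_
    rw [ae_restrict_iff' measurableSet_Ioi]
    filter_upwards with t ht
    rw [Real.norm_eq_abs, abs_of_nonneg (hgnn t ht)]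
    exact hbound t ht
  have htend : Tendsto (fun x : ℝ => -v * rexp (-x ^ 2 / (2 * v)) * (x + 1)⁻¹) atTop (nhds 0) := by
    have hA : Tendsto (fun x : ℝ => -v * rexp (-x ^ 2 / (2 * v))) atTop (nhds 0) := by
      simpa using (gauss_exp_tendsto hv0).const_mul (-v)
    have hB : Tendsto (fun x : ℝ => (x + 1)⁻¹) atTop (nhds 0) :=
      tendsto_inv_atTop_zero.comp (tendsto_atTop_add_const_right atTop 1 tendsto_id)
    simpa using hA.mul hB
  have hint := integral_Ioi_of_hasDerivAt_of_tendsto' hderiv hgint htend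
  have key : ∫ t in Ioi c, g t = v * rexp (-c ^ 2 / (2 * v)) / (c + 1) := by
    rw [hint]; field_simp; ring
  rw [← key]
  exact setIntegral_mono_on hgint (gauss_integrableOn_exp hv0 c) measurableSet_Ioi hbound

private lemma gauss_key {v : ℝ} (hv0 : 0 < v) (hv1 : v ≤ 1) {c : ℝ} (hc : 0 ≤ c) :
    ∫ t in Ioi c, (t - c) * rexp (-t ^ 2 / (2 * v)) ≤ ∫ t in Ioi c, rexp (-t ^ 2 / (2 * v)) := by
  have hE := gauss_integrableOn_exp hv0 c
  have hTE := gauss_integrableOn_id_mul_exp hv0 c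
  have hsplit : ∫ t in Ioi c, (t - c) * rexp (-t ^ 2 / (2 * v))
      = (∫ t in Ioi c, t * rexp (-t ^ 2 / (2 * v)))
        - c * ∫ t in Ioi c, rexp (-t ^ 2 / (2 * v)) := by
    simp_rw [sub_mul]
    rw [integral_sub hTE (hE.const_mul c), integral_const_mul]
  have hlb := gauss_tail_lb hv0 hv1 hc
  have hmul := mul_le_mul_of_nonneg_left hlb (show (0:ℝ) ≤ c + 1 by linarith)
  have heq : (c + 1) * (v * rexp (-c ^ 2 / (2 * v)) / (c + 1)) = v * rexp (-c ^ 2 / (2 * v)) := by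
    field_simp
  rw [hsplit, gauss_integral_id_mul_exp hv0 c]
  nlinarith [hmul, heq]

/-- Step inside the proof of Lemma 2 of the paper: the expected positive part of the
overshoot of a zero-mean Gaussian with variance at most 1 beyond a nonnegative
threshold is at most the probability of exceeding the threshold in absolute value. -/
theorem gaussian_expected_positive_overshoot_le_prob
    {Ω : Type*} [MeasurableSpace Ω] (P : Measure Ω) [IsProbabilityMeasure P]
    (Z : Ω → ℝ) (v : NNReal) (hv0 : 0 < v) (hv1 : (v : ℝ) ≤ 1)
    (hZ : Measure.map Z P = gaussianReal 0 v) (c : ℝ) (hc : 0 ≤ c) :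
    (∫ ω, max (|Z ω| - c) 0 ∂P) ≤ (P {ω | |Z ω| > c}).toReal := by
  have hvne : v ≠ 0 := hv0.ne'
  have hvR : (0:ℝ) < (v:ℝ) := by exact_mod_cast hv0
  -- Z is a.e.-measurable
  have hZae : AEMeasurable Z P := by
    by_contra h
    rw [Measure.map_of_not_aemeasurable h] at hZ
    have := congrArg (fun μ : Measure ℝ => μ Set.univ) hZ
    simp [measure_univ] at this
  -- set of exceedance
  have hSm : MeasurableSet {x : ℝ | |x| > c} :=
    measurableSet_lt measurable_const measurable_abs
  -- pdf evenness
  have hpdf_even : ∀ x : ℝ, gaussianPDFReal 0 v |x| = gaussianPDFReal 0 v x := by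
    intro x
    simp [gaussianPDFReal, sub_zero, sq_abs]
  -- LHS reduction to Lebesgue integral
  have hL : (∫ ω, max (|Z ω| - c) 0 ∂P)
      = ∫ x, gaussianPDFReal 0 v x * max (|x| - c) 0 := by
    have h1 : (∫ ω, max (|Z ω| - c) 0 ∂P) = ∫ x, max (|x| - c) 0 ∂(gaussianReal 0 v) := by
      rw [← hZ]
      exact (integral_map hZae
        (((continuous_abs.sub continuous_const).max continuous_const).aestronglyMeasurable)).symm
    rw [h1, gaussianReal_of_var_ne_zero 0 hvne]
    have hm : Measurable fun x => (gaussianPDFReal 0 v x).toNNReal :=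
      (measurable_gaussianPDFReal 0 v).real_toNNReal
    have h2 : volume.withDensity (gaussianPDF 0 v)
        = volume.withDensity (fun x => ((gaussianPDFReal 0 v x).toNNReal : ℝ≥0∞)) := rfl
    rw [h2, integral_withDensity_eq_integral_smul hm]
    congr 1
    ext x
    simp [NNReal.smul_def, Real.coe_toNNReal _ (gaussianPDFReal_nonneg 0 v x)]
  -- RHS reduction
  have hR : (P {ω | |Z ω| > c}).toReal
      = ∫ x in {x : ℝ | |x| > c}, gaussianPDFReal 0 v x := by
    have h1 : P {ω | |Z ω| > c} = (gaussianReal 0 v) {x : ℝ | |x| > c} := by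
      rw [← hZ, Measure.map_apply_of_aemeasurable hZae hSm]
      rfl
    rw [h1, gaussianReal_apply_eq_integral 0 hvne, ENNReal.toReal_ofReal]
    exact setIntegral_nonneg hSm (fun x _ => gaussianPDFReal_nonneg 0 v x)
  rw [hL, hR]
  -- reduce LHS by symmetry of the pdf
  have hL2 : ∫ x, gaussianPDFReal 0 v x * max (|x| - c) 0
      = 2 * ∫ t in Ioi c, gaussianPDFReal 0 v t * (t - c) := by
    have h := integral_comp_abs (f := fun t => gaussianPDFReal 0 v t * max (t - c) 0)
    have e1 : ∫ x, gaussianPDFReal 0 v x * max (|x| - c) 0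
        = 2 * ∫ t in Ioi 0, gaussianPDFReal 0 v t * max (t - c) 0 := by
      rw [← h]
      congr 1
      ext x
      simp only [hpdf_even]
    rw [e1]
    congr 1
    have e2 : ∀ t : ℝ, gaussianPDFReal 0 v t * max (t - c) 0
        = (Ioi c).indicator (fun t => gaussianPDFReal 0 v t * (t - c)) t := by
      intro t
      by_cases h : t ∈ Ioi c
      · rw [Set.indicator_of_mem h, max_eq_left (by simp only [mem_Ioi] at h; linarith)]
      · rw [Set.indicator_of_notMem h]
        simp only [mem_Ioi, not_lt] at h
        rw [max_eq_right (by linarith)]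
        ring
    simp_rw [e2]
    rw [setIntegral_indicator measurableSet_Ioi, Ioi_inter_Ioi, max_eq_right hc]
  -- reduce RHS by symmetry of the pdf
  have hR2 : ∫ x in {x : ℝ | |x| > c}, gaussianPDFReal 0 v x
      = 2 * ∫ t in Ioi c, gaussianPDFReal 0 v t := by
    rw [← integral_indicator hSm]
    have h := integral_comp_abs (f := (Ioi c).indicator (gaussianPDFReal 0 v))
    have e1 : ∫ x, ({x : ℝ | |x| > c}).indicator (gaussianPDFReal 0 v) x
        = 2 * ∫ t in Ioi 0, (Ioi c).indicator (gaussianPDFReal 0 v) t := by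
      rw [← h]
      congr 1
      ext x
      by_cases hx : c < |x|
      · rw [Set.indicator_of_mem (by exact hx), Set.indicator_of_mem (by exact hx), hpdf_even x]
      · rw [Set.indicator_of_notMem (by exact hx), Set.indicator_of_notMem (by exact hx)]
    rw [e1]
    congr 1
    rw [setIntegral_indicator measurableSet_Ioi, Ioi_inter_Ioi, max_eq_right hc]
  rw [hL2, hR2]
  -- final inequality
  have hK : (0:ℝ) ≤ (√(2 * Real.pi * v))⁻¹ := by positivity
  have e3 : ∀ t : ℝ, gaussianPDFReal 0 v t * (t - c)
      = (√(2 * Real.pi * v))⁻¹ * ((t - c) * rexp (-t ^ 2 / (2 * (v:ℝ)))) := by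
    intro t
    simp only [gaussianPDFReal, sub_zero]
    ring
  have e4 : ∀ t : ℝ, gaussianPDFReal 0 v t
      = (√(2 * Real.pi * v))⁻¹ * rexp (-t ^ 2 / (2 * (v:ℝ))) := by
    intro t
    simp only [gaussianPDFReal, sub_zero]
  simp_rw [e3, e4]
  rw [integral_const_mul, integral_const_mul]
  have := gauss_key hvR hv1 hc
  nlinarith [this, hK]
end
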